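/- arXiv:2301.02992 — 4 statements merged into one kernel-verified Lean document; each statement's English description precedes it below -/
import Mathlib

section
/- Let 0 < σ ≤ 1/2, β ∈ ℝ, τ > 0, and define Φ(z) = z e^{-iτ β |z|^{2σ}} for z ∈ ℂ. Then for all z₁, z₂ ∈ ℂ, |Φ(z₁) - Φ(z₂)| ≤ (1 + 2σ|β| τ · min(|z₁|,|z₂|)^{2σ}) |z₁ - z₂|. -/
open Complex Real

/-- |e^{ia} - e^{ib}| ≤ |a - b| for real a, b. -/
lemma exp_I_diff_le (a b : ℝ) :
    ‖(Complex.exp ((a : ℂ) * Complex.I) - Complex.exp ((b : ℂ) * Complex.I))‖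
      ≤ |a - b| := by
  have key : ∀ θ : ℝ, ‖(Complex.exp ((θ : ℂ) * Complex.I) - 1)‖ ≤ |θ| := by
    intro θ
    have h1 : 1 - θ ^ 2 / 2 ≤ Real.cos θ := Real.one_sub_sq_div_two_le_cos
    rw [← Real.sqrt_sq_eq_abs, show ‖(Complex.exp ((θ : ℂ) * Complex.I) - 1)‖
        = Real.sqrt (Complex.normSq (Complex.exp ((θ : ℂ) * Complex.I) - 1)) from rfl]
    apply Real.sqrt_le_sqrt
    simp [Complex.normSq_apply, Complex.exp_re, Complex.exp_im]
    nlinarith [Real.sin_sq_add_cos_sq θ]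
  have factor : Complex.exp ((a : ℂ) * Complex.I) - Complex.exp ((b : ℂ) * Complex.I)
      = Complex.exp ((b : ℂ) * Complex.I) * (Complex.exp (((a - b : ℝ) : ℂ) * Complex.I) - 1) := by
    push_cast
    rw [mul_sub, ← Complex.exp_add]
    ring_nf
  rw [factor, norm_mul]
  have : ‖(Complex.exp ((b : ℂ) * Complex.I))‖ = 1 := by
    rw [Complex.norm_exp]
    simp
  rw [this, one_mul]
  exact key _

/-- Tangent line inequality for rpow. -/
lemma rpow_tangent {a b α : ℝ} (hb : 0 ≤ b) (hab : b ≤ a) (hα0 : 0 < α) (hα1 : α ≤ 1) :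
    b * (a ^ α - b ^ α) ≤ α * b ^ α * (a - b) := by
  rcases eq_or_lt_of_le hb with h0 | h0
  · rw [← h0, Real.zero_rpow hα0.ne']
    simp
  · set s := (a - b) / b with hs
    have hs0 : 0 ≤ s := div_nonneg (by linarith) h0.le
    have ha : a = b * (1 + s) := by rw [hs]; field_simp; ring
    have h2 : a ^ α = b ^ α * (1 + s) ^ α := by
      rw [ha, Real.mul_rpow h0.le (by linarith)]
    have h3 : (1 + s) ^ α ≤ 1 + α * s := by
      exact rpow_one_add_le_one_add_mul_self (by linarith) hα0.le hα1
    have hbα : 0 < b ^ α := Real.rpow_pos_of_pos h0 α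
    have hsb : s * b = a - b := by rw [hs]; field_simp
    have h4 : a ^ α ≤ b ^ α + α * b ^ α * s := by
      rw [h2]; nlinarith [mul_le_mul_of_nonneg_left h3 hbα.le]
    calc b * (a ^ α - b ^ α) ≤ b * (α * b ^ α * s) := by
          apply mul_le_mul_of_nonneg_left (by linarith) h0.le
      _ = α * b ^ α * (a - b) := by rw [← hsb]; ring

lemma stmt2_aux (σ β τ : ℝ) (hσ0 : 0 < σ) (hσ : σ ≤ 1 / 2) (hτ : 0 < τ)
    (z₁ z₂ : ℂ) (hle : ‖z₂‖ ≤ ‖z₁‖) :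
    ‖(z₁ * Complex.exp (-Complex.I * τ * ((β * (‖z₁‖) ^ (2 * σ) : ℝ) : ℂ))
          - z₂ * Complex.exp (-Complex.I * τ * ((β * (‖z₂‖) ^ (2 * σ) : ℝ) : ℂ)))‖
      ≤ (1 + 2 * σ * |β| * τ * (‖z₂‖) ^ (2 * σ)) * ‖(z₁ - z₂)‖ := by
  set a := ‖z₁‖ with ha
  set b := ‖z₂‖ with hb
  set α := 2 * σ with hα
  have hα0 : 0 < α := by positivity
  have hα1 : α ≤ 1 := by rw [hα]; linarith
  have hb0 : 0 ≤ b := norm_nonneg _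
  have ha0 : 0 ≤ a := norm_nonneg _
  set E₁ := Complex.exp (-Complex.I * τ * ((β * a ^ α : ℝ) : ℂ)) with hE₁
  set E₂ := Complex.exp (-Complex.I * τ * ((β * b ^ α : ℝ) : ℂ)) with hE₂
  set D := ‖(z₁ - z₂)‖ with hD
  have hD0 : 0 ≤ D := norm_nonneg _
  have decomp : z₁ * E₁ - z₂ * E₂ = (z₁ - z₂) * E₁ + z₂ * (E₁ - E₂) := by ring
  have hE₁abs : ‖E₁‖ = 1 := by
    rw [hE₁, Complex.norm_exp]
    simp [Complex.mul_re]
  have hEcast : ∀ c : ℝ, -Complex.I * (τ : ℂ) * (c : ℂ) = ((-(τ * c) : ℝ) : ℂ) * Complex.I := by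
    intro c; push_cast; ring
  have hrpow : b ^ α ≤ a ^ α := Real.rpow_le_rpow hb0 hle hα0.le
  have hEdiff : ‖(E₁ - E₂)‖ ≤ τ * |β| * (a ^ α - b ^ α) := by
    rw [hE₁, hE₂, hEcast, hEcast]
    refine (exp_I_diff_le _ _).trans_eq ?_
    rw [show -(τ * (β * a ^ α)) - -(τ * (β * b ^ α)) = -(τ * (β * (a ^ α - b ^ α))) by ring,
      abs_neg, abs_mul, abs_mul, abs_of_pos hτ, _root_.abs_of_nonneg (show (0:ℝ) ≤ a ^ α - b ^ α by linarith)]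
    ring
  have htan : b * (a ^ α - b ^ α) ≤ α * b ^ α * (a - b) := rpow_tangent hb0 hle hα0 hα1
  have habD : a - b ≤ D := by
    have := abs_norm_sub_norm_le z₁ z₂
    calc a - b ≤ |a - b| := le_abs_self _
      _ ≤ D := this
  have hbα0 : 0 ≤ b ^ α := Real.rpow_nonneg hb0 _
  calc ‖(z₁ * E₁ - z₂ * E₂)‖
      ≤ ‖((z₁ - z₂) * E₁)‖ + ‖(z₂ * (E₁ - E₂))‖ := by
        rw [decomp]; exact norm_add_le _ _
    _ = D + b * ‖(E₁ - E₂)‖ := by rw [norm_mul, norm_mul, hE₁abs, mul_one]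
    _ ≤ D + b * (τ * |β| * (a ^ α - b ^ α)) := by
        gcongr
    _ = D + τ * |β| * (b * (a ^ α - b ^ α)) := by ring
    _ ≤ D + τ * |β| * (α * b ^ α * (a - b)) := by
        have h1 : 0 ≤ τ * |β| := by positivity
        nlinarith
    _ ≤ D + τ * |β| * (α * b ^ α * D) := by
        gcongr
    _ = (1 + α * |β| * τ * b ^ α) * D := by ring

/-- Stability of the nonlinear phase flow `Φ(z) = z e^{-iτβ|z|^{2σ}}` for `0 < σ ≤ 1/2`. -/
theorem stmt2 (σ β τ : ℝ) (hσ0 : 0 < σ) (hσ : σ ≤ 1 / 2) (hτ : 0 < τ)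
    (z₁ z₂ : ℂ) :
    ‖(z₁ * Complex.exp (-Complex.I * τ * ((β * (‖z₁‖) ^ (2 * σ) : ℝ) : ℂ))
          - z₂ * Complex.exp (-Complex.I * τ * ((β * (‖z₂‖) ^ (2 * σ) : ℝ) : ℂ)))‖
      ≤ (1 + 2 * σ * |β| * τ * (min (‖z₁‖) (‖z₂‖)) ^ (2 * σ))
        * ‖(z₁ - z₂)‖ := by
  rcases le_total (‖z₂‖) (‖z₁‖) with h | h
  · rw [min_eq_right h]
    exact stmt2_aux σ β τ hσ0 hσ hτ z₁ z₂ h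
  · rw [min_eq_left h]
    have := stmt2_aux σ β τ hσ0 hσ hτ z₂ z₁ h
    rwa [norm_sub_rev, norm_sub_rev z₂ z₁] at this
end

section
/- Let σ > 0 and β ∈ ℝ, and set f(ρ) = β ρ^σ. Then for all z₁, z₂ ∈ ℂ, |f(|z₁|²) z₁ - f(|z₂|²) z₂| ≤ C max(|z₁|,|z₂|)^{2σ} |z₁ - z₂|, where C depends only on σ and β. -/
private lemma keyt (α t : ℝ) (hα : 0 < α) (ht0 : 0 ≤ t) (ht1 : t ≤ 1) :
    t * (1 - t ^ α) ≤ max 1 α * (1 - t) := by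
  rcases le_total α 1 with hle | hge
  · rcases eq_or_lt_of_le ht0 with h0 | h0
    · rw [← h0]
      simp
    · have h1 : t * t ^ α = t ^ (1 + α) := by
        rw [Real.rpow_add h0, Real.rpow_one]
      have h2 : t ^ (2:ℝ) ≤ t ^ (1 + α) :=
        Real.rpow_le_rpow_of_exponent_ge h0 ht1 (by linarith)
      have h3 : t ^ (2:ℝ) = t * t := by
        rw [show (2:ℝ) = 1 + 1 by norm_num, Real.rpow_add h0, Real.rpow_one]
      have hmax : (1:ℝ) ≤ max 1 α := le_max_left _ _
      have e1 : t * (1 - t ^ α) = t - t ^ (1 + α) := by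
        rw [mul_sub, mul_one, h1]
      have e2 : t - t ^ (1 + α) ≤ t - t * t := by
        rw [← h3]; linarith
      have e3 : t - t * t ≤ 1 - t := by nlinarith
      have e4 : 1 - t ≤ max 1 α * (1 - t) :=
        le_mul_of_one_le_left (sub_nonneg.mpr ht1) hmax
      linarith only [e1, e2, e3, e4]
  · have hb : 1 + α * (t - 1) ≤ t ^ α := by
      have := one_add_mul_self_le_rpow_one_add (s := t - 1) (by linarith) hge
      simpa using this
    have htα : t ^ α ≤ 1 := Real.rpow_le_one ht0 ht1 hα.le
    have hmax : α ≤ max 1 α := le_max_right _ _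
    have h4 : t * (1 - t ^ α) ≤ 1 - t ^ α := by nlinarith
    nlinarith

private lemma key (α x y : ℝ) (hα : 0 < α) (hy : 0 ≤ y) (hxy : y ≤ x) :
    y * (x ^ α - y ^ α) ≤ max 1 α * (x ^ α * (x - y)) := by
  rcases eq_or_lt_of_le (hy.trans hxy) with h0 | hx
  · have hx0 : x = 0 := h0.symm
    have hy0 : y = 0 := le_antisymm (hx0 ▸ hxy) hy
    simp [hy0, hx0, Real.zero_rpow hα.ne']
  · set t := y / x with htdef
    have ht0 : 0 ≤ t := div_nonneg hy hx.le
    have ht1 : t ≤ 1 := (div_le_one hx).mpr hxy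
    have hyt : y = t * x := by rw [htdef, div_mul_cancel₀ _ hx.ne']
    have hyα : y ^ α = t ^ α * x ^ α := by
      rw [hyt, Real.mul_rpow ht0 hx.le]
    have hkey := keyt α t hα ht0 ht1
    have hxα : 0 < x ^ α := Real.rpow_pos_of_pos hx α
    calc y * (x ^ α - y ^ α) = (x * x ^ α) * (t * (1 - t ^ α)) := by
          rw [hyα, hyt]; ring
      _ ≤ (x * x ^ α) * (max 1 α * (1 - t)) := by
          apply mul_le_mul_of_nonneg_left hkey (by positivity)
      _ = max 1 α * (x ^ α * (x - y)) := by
          rw [hyt]; ring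

private lemma aux (σ β : ℝ) (hσ : 0 < σ) (z₁ z₂ : ℂ)
    (h : ‖z₂‖ ≤ ‖z₁‖) :
    ‖((β * (‖z₁‖) ^ (2 * σ) : ℝ) : ℂ) * z₁
        - ((β * (‖z₂‖) ^ (2 * σ) : ℝ) : ℂ) * z₂‖
      ≤ (|β| * (1 + max 1 (2*σ)) + 1) * (max (‖z₁‖) (‖z₂‖)) ^ (2 * σ)
        * ‖z₁ - z₂‖ := by
  set a := ‖z₁‖ with ha
  set b := ‖z₂‖ with hb
  set e := 2 * σ with he
  have ha0 : 0 ≤ a := norm_nonneg _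
  have hb0 : 0 ≤ b := norm_nonneg _
  have hmax : max a b = a := max_eq_left h
  have hdecomp : ((β * a ^ e : ℝ) : ℂ) * z₁ - ((β * b ^ e : ℝ) : ℂ) * z₂
      = ((β * a ^ e : ℝ) : ℂ) * (z₁ - z₂) + (((β * a ^ e : ℝ) : ℂ) - ((β * b ^ e : ℝ) : ℂ)) * z₂ := by
    ring
  rw [hdecomp, hmax]
  have hd : a - b ≤ ‖z₁ - z₂‖ := by
    simpa [ha, hb] using norm_sub_norm_le z₁ z₂
  have hd0 : 0 ≤ ‖z₁ - z₂‖ := norm_nonneg _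
  have hkey := key e a b (by positivity) hb0 h
  have haε : 0 ≤ a ^ e := Real.rpow_nonneg ha0 e
  have hbe : b ^ e ≤ a ^ e := Real.rpow_le_rpow hb0 h (by positivity)
  calc ‖((β * a ^ e : ℝ) : ℂ) * (z₁ - z₂)
          + (((β * a ^ e : ℝ) : ℂ) - ((β * b ^ e : ℝ) : ℂ)) * z₂‖
      ≤ ‖((β * a ^ e : ℝ) : ℂ) * (z₁ - z₂)‖
        + ‖(((β * a ^ e : ℝ) : ℂ) - ((β * b ^ e : ℝ) : ℂ)) * z₂‖ :=
        norm_add_le _ _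
    _ = |β * a ^ e| * ‖z₁ - z₂‖ + |β * a ^ e - β * b ^ e| * b := by
        rw [norm_mul, norm_mul, Complex.norm_real, Real.norm_eq_abs, ← Complex.ofReal_sub, Complex.norm_real, Real.norm_eq_abs, ← hb]
    _ = |β| * a ^ e * ‖z₁ - z₂‖ + |β| * ((a ^ e - b ^ e) * b) := by
        rw [abs_mul, abs_of_nonneg haε, ← mul_sub, abs_mul,
          abs_of_nonneg (sub_nonneg.mpr hbe)]
        ring
    _ ≤ |β| * a ^ e * ‖z₁ - z₂‖ + |β| * (max 1 e * (a ^ e * (a - b))) := by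
        have := mul_le_mul_of_nonneg_left (by nlinarith [key e a b (show (0:ℝ) < e by positivity) hb0 h] : (a ^ e - b ^ e) * b ≤ max 1 e * (a ^ e * (a - b))) (abs_nonneg β)
        linarith
    _ ≤ |β| * a ^ e * ‖z₁ - z₂‖ + |β| * (max 1 e * (a ^ e * ‖z₁ - z₂‖)) := by
        have h1 : 0 ≤ |β| * (max 1 e * a ^ e) := by positivity
        nlinarith [mul_le_mul_of_nonneg_left hd (show (0:ℝ) ≤ |β| * (max 1 e * a ^ e) by positivity)]
    _ ≤ (|β| * (1 + max 1 e) + 1) * a ^ e * ‖z₁ - z₂‖ := by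
        nlinarith [mul_nonneg haε hd0]

/-- For `σ > 0`: `|f(|z₁|²)z₁ - f(|z₂|²)z₂| ≤ C max(|z₁|,|z₂|)^{2σ}|z₁-z₂|`,
with `C` depending only on `σ, β`. -/
theorem stmt5 (σ β : ℝ) (hσ : 0 < σ) :
    ∃ C : ℝ, 0 < C ∧ ∀ z₁ z₂ : ℂ,
      ‖((β * (‖z₁‖) ^ (2 * σ) : ℝ) : ℂ) * z₁
          - ((β * (‖z₂‖) ^ (2 * σ) : ℝ) : ℂ) * z₂‖
        ≤ C * (max (‖z₁‖) (‖z₂‖)) ^ (2 * σ)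
          * ‖z₁ - z₂‖ := by
  refine ⟨|β| * (1 + max 1 (2*σ)) + 1, by positivity, fun z₁ z₂ => ?_⟩
  rcases le_total (‖z₂‖) (‖z₁‖) with h | h
  · exact aux σ β hσ z₁ z₂ h
  · have := aux σ β hσ z₂ z₁ h
    calc ‖((β * (‖z₁‖) ^ (2 * σ) : ℝ) : ℂ) * z₁
          - ((β * (‖z₂‖) ^ (2 * σ) : ℝ) : ℂ) * z₂‖
        = ‖((β * (‖z₂‖) ^ (2 * σ) : ℝ) : ℂ) * z₂
          - ((β * (‖z₁‖) ^ (2 * σ) : ℝ) : ℂ) * z₁‖ := by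
          rw [← norm_neg]; ring_nf
      _ ≤ _ := by
          rw [max_comm (‖z₁‖) (‖z₂‖), show ‖z₁ - z₂‖ = ‖z₂ - z₁‖ by
            rw [← norm_neg]; ring_nf]
          exact this
end

section
/- Let σ ≥ 1/2, β ∈ ℝ, and define G : ℂ → ℂ by G(z) = βσ|z|^{2σ-2} z² for z ≠ 0 and G(0) = 0. Then for all z₁, z₂ ∈ ℂ, |G(z₁) - G(z₂)| ≤ C max(|z₁|,|z₂|)^{2σ-1} |z₁ - z₂|, where C depends only on σ and β. -/
open Real

lemma key_scalar {q t : ℝ} (hq : -1 ≤ q) (ht0 : 0 ≤ t) (ht1 : t ≤ 1) :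
    t ^ 2 * |1 - t ^ q| ≤ |q| * (1 - t) := by
  rcases eq_or_lt_of_le ht0 with h0 | h0
  · rw [← h0]
    simpa using mul_nonneg (abs_nonneg q) (by linarith : (0:ℝ) ≤ 1 - t)
  rcases le_or_gt 1 q with hq1 | hq1
  · -- q ≥ 1 : Bernoulli
    have htq1 : t ^ q ≤ 1 := Real.rpow_le_one ht0 ht1 (by linarith)
    have hbern := one_add_mul_self_le_rpow_one_add (s := t - 1) (by linarith) hq1
    rw [show (1 : ℝ) + (t - 1) = t by ring] at hbern
    rw [abs_of_nonneg (by linarith), abs_of_nonneg (by linarith : (0:ℝ) ≤ q)]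
    nlinarith [sq_nonneg t, sq_nonneg (1 - t), pow_le_one₀ ht0 ht1 (n := 2)]
  rcases le_or_gt q 0 with hq0 | hq0
  · -- -1 ≤ q ≤ 0
    have htq1 : 1 ≤ t ^ q := Real.one_le_rpow_of_pos_of_le_one_of_nonpos h0 ht1 hq0
    rw [abs_of_nonpos (by linarith), abs_of_nonpos hq0]
    -- LHS = t^(q+2) - t^2
    have e1 : t ^ 2 * t ^ q = t ^ (q + 2) := by
      rw [← Real.rpow_natCast t 2, ← Real.rpow_add h0]; ring_nf
    have hamgm := Real.geom_mean_le_arith_mean2_weighted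
      (w₁ := (q+2)/2) (w₂ := -q/2) (p₁ := t^2) (p₂ := 1)
      (by linarith) (by linarith) (by positivity) zero_le_one (by ring)
    rw [Real.one_rpow, mul_one] at hamgm
    have e2 : (t ^ 2) ^ ((q+2)/2) = t ^ (q + 2) := by
      rw [← Real.rpow_natCast t 2, ← Real.rpow_mul ht0]; norm_num; ring_nf
    rw [e2] at hamgm
    nlinarith [sq_nonneg t, sq_nonneg (1 - t)]
  · -- 0 < q < 1 : AM-GM  t^(1-q) ≤ (1-q) t + q
    have htq1 : t ^ q ≤ 1 := Real.rpow_le_one ht0 ht1 hq0.le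
    rw [abs_of_nonneg (by linarith), abs_of_nonneg hq0.le]
    have hamgm := Real.geom_mean_le_arith_mean2_weighted
      (w₁ := 1 - q) (w₂ := q) (p₁ := t) (p₂ := 1)
      (by linarith) hq0.le ht0 zero_le_one (by ring)
    simp only [Real.one_rpow, mul_one] at hamgm
    -- t^2 (1 - t^q) = t^(q+1) (t^(1-q) - t) ≤ t^(q+1) q (1-t) ≤ q(1-t)
    have e1 : t ^ (q+1) * t ^ (1-q) = t ^ 2 := by
      rw [← Real.rpow_add h0, show q+1+(1-q) = (2:ℝ) by ring, Real.rpow_two]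
    have e2 : t ^ (q+1) * t = t ^ 2 * t ^ q := by
      have h5 : t ^ (q+1) = t ^ q * t := by
        rw [Real.rpow_add h0, Real.rpow_one]
      rw [h5, pow_two]; ring
    have h3 : t ^ (q+1) ≤ 1 := Real.rpow_le_one ht0 ht1 (by linarith)
    have h4 : 0 ≤ t ^ (q+1) := Real.rpow_nonneg ht0 _
    have h6 : t ^ (q+1) * (1-t) ≤ 1-t := by nlinarith
    nlinarith [mul_le_mul_of_nonneg_left hamgm h4, mul_le_mul_of_nonneg_left h6 hq0.le]

lemma key_scaled {q a b : ℝ} (hq : -1 ≤ q) (hb : 0 ≤ b) (hab : b ≤ a) :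
    |a ^ q - b ^ q| * b ^ 2 ≤ |q| * a ^ (q + 1) * (a - b) := by
  rcases eq_or_lt_of_le hb with h0 | h0
  · rw [← h0]
    have ha : (0:ℝ) ≤ a := le_trans hb hab
    have : (0:ℝ) ≤ |q| * a ^ (q + 1) * (a - 0) := by
      rw [sub_zero]
      exact mul_nonneg (mul_nonneg (abs_nonneg q) (Real.rpow_nonneg ha _)) ha
    simpa using this
  have ha : 0 < a := lt_of_lt_of_le h0 hab
  have haq : 0 < a ^ q := Real.rpow_pos_of_pos ha q
  have key := key_scalar hq (le_of_lt (div_pos h0 ha)) ((div_le_one ha).mpr hab)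
  rw [Real.div_rpow hb ha.le] at key
  have habs : |1 - b ^ q / a ^ q| = |a ^ q - b ^ q| / a ^ q := by
    rw [show (1 : ℝ) - b ^ q / a ^ q = (a ^ q - b ^ q) / a ^ q by field_simp,
      abs_div, abs_of_pos haq]
  rw [habs] at key
  have hmul := mul_le_mul_of_nonneg_right key
    (le_of_lt (mul_pos haq (pow_pos ha 2)))
  have eL : (b / a) ^ 2 * (|a ^ q - b ^ q| / a ^ q) * (a ^ q * a ^ 2)
      = |a ^ q - b ^ q| * b ^ 2 := by
    field_simp
  have eR : |q| * (1 - b / a) * (a ^ q * a ^ 2) = |q| * a ^ (q + 1) * (a - b) := by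
    rw [Real.rpow_add ha, Real.rpow_one]
    field_simp
  rw [eL, eR] at hmul
  exact hmul

/-- `G(z) = βσ|z|^{2σ-2} z²` for `z ≠ 0`, `G(0)=0`. -/
noncomputable def Gfun (σ β : ℝ) (z : ℂ) : ℂ :=
  if z = 0 then 0 else ((β * σ * (‖z‖) ^ (2 * σ - 2) : ℝ) : ℂ) * z ^ 2

lemma main_aux (σ β : ℝ) (hσ : 1 / 2 ≤ σ) (z₁ z₂ : ℂ)
    (hle : ‖z₂‖ ≤ ‖z₁‖) :
    ‖Gfun σ β z₁ - Gfun σ β z₂‖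
      ≤ (|β| * σ * (2 + |2 * σ - 2|) + 1) * (‖z₁‖) ^ (2 * σ - 1)
        * ‖z₁ - z₂‖ := by
  set a := ‖z₁‖ with ha_def
  set b := ‖z₂‖ with hb_def
  set q : ℝ := 2 * σ - 2 with hq_def
  have hq : -1 ≤ q := by rw [hq_def]; linarith
  have hσ0 : 0 ≤ σ := by linarith
  have hK : 0 ≤ |β| * σ := mul_nonneg (abs_nonneg β) hσ0
  have hexp : 2 * σ - 1 = q + 1 := by rw [hq_def]; ring
  by_cases h1 : z₁ = 0
  · have hb0 : b = 0 := le_antisymm (by simpa [ha_def, h1] using hle) (norm_nonneg z₂)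
    have h2 : z₂ = 0 := by simpa [hb_def] using hb0
    subst h1; subst h2
    simp [Gfun]
  have ha : 0 < a := norm_pos_iff.mpr h1
  have haq1 : 0 ≤ a ^ (q + 1) := Real.rpow_nonneg ha.le _
  have ea : a ^ q * a = a ^ (q + 1) := by
    rw [Real.rpow_add ha, Real.rpow_one]
  by_cases h2 : z₂ = 0
  · subst h2
    rw [show Gfun σ β 0 = 0 by simp [Gfun], sub_zero, sub_zero]
    rw [show Gfun σ β z₁ = ((β * σ * a ^ q : ℝ) : ℂ) * z₁ ^ 2 from if_neg h1]
    rw [norm_mul, Complex.norm_real, Real.norm_eq_abs, norm_pow]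
    have e1 : |β * σ * a ^ q| = |β| * σ * a ^ q := by
      rw [abs_mul, abs_mul, abs_of_nonneg hσ0, abs_of_nonneg (Real.rpow_nonneg ha.le q)]
    rw [e1, hexp]
    have goal1 : |β| * σ * a ^ q * a ^ 2 = |β| * σ * (a ^ (q+1) * a) := by
      rw [← ea]; ring
    rw [goal1]
    have hX : 0 ≤ a ^ (q+1) * a := mul_nonneg haq1 ha.le
    nlinarith [mul_nonneg (mul_nonneg hK (abs_nonneg q)) hX, mul_nonneg hK hX]
  · -- both nonzero
    have hb : 0 < b := norm_pos_iff.mpr h2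
    have hd : 0 ≤ ‖z₁ - z₂‖ := norm_nonneg _
    set d := ‖z₁ - z₂‖ with hd_def
    rw [show Gfun σ β z₁ = ((β * σ * a ^ q : ℝ) : ℂ) * z₁ ^ 2 from if_neg h1,
      show Gfun σ β z₂ = ((β * σ * b ^ q : ℝ) : ℂ) * z₂ ^ 2 from if_neg h2]
    have decomp : ((β * σ * a ^ q : ℝ) : ℂ) * z₁ ^ 2 - ((β * σ * b ^ q : ℝ) : ℂ) * z₂ ^ 2
        = ((β * σ * a ^ q : ℝ) : ℂ) * (z₁ ^ 2 - z₂ ^ 2)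
          + ((β * σ * (a ^ q - b ^ q) : ℝ) : ℂ) * z₂ ^ 2 := by
      push_cast; ring
    rw [decomp]
    refine le_trans (norm_add_le _ _) ?_
    -- term 1
    have t1 : ‖((β * σ * a ^ q : ℝ) : ℂ) * (z₁ ^ 2 - z₂ ^ 2)‖
        ≤ |β| * σ * a ^ q * (2 * a * d) := by
      rw [norm_mul, Complex.norm_real, Real.norm_eq_abs]
      have e1 : |β * σ * a ^ q| = |β| * σ * a ^ q := by
        rw [abs_mul, abs_mul, abs_of_nonneg hσ0, abs_of_nonneg (Real.rpow_nonneg ha.le q)]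
      rw [e1]
      have h12 : ‖z₁ ^ 2 - z₂ ^ 2‖ ≤ 2 * a * d := by
        rw [show z₁ ^ 2 - z₂ ^ 2 = (z₁ + z₂) * (z₁ - z₂) by ring, norm_mul]
        have hsum : ‖z₁ + z₂‖ ≤ 2 * a :=
          le_trans (norm_add_le z₁ z₂) (by rw [← ha_def, ← hb_def]; linarith)
        exact mul_le_mul_of_nonneg_right hsum hd |>.trans (by rw [mul_assoc])
      exact mul_le_mul_of_nonneg_left h12
        (mul_nonneg hK (Real.rpow_nonneg ha.le q))
    -- term 2
    have t2 : ‖((β * σ * (a ^ q - b ^ q) : ℝ) : ℂ) * z₂ ^ 2‖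
        ≤ |β| * σ * (|q| * a ^ (q+1) * d) := by
      rw [norm_mul, Complex.norm_real, Real.norm_eq_abs, norm_pow, ← hb_def]
      have e1 : |β * σ * (a ^ q - b ^ q)| = |β| * σ * |a ^ q - b ^ q| := by
        rw [abs_mul, abs_mul, abs_of_nonneg hσ0]
      rw [e1, mul_assoc (|β| * σ)]
      refine mul_le_mul_of_nonneg_left ?_ hK
      refine le_trans (key_scaled hq hb.le hle) ?_
      have hab_d : a - b ≤ d := by
        rw [hd_def, ha_def, hb_def]
        exact norm_sub_norm_le z₁ z₂
      have : 0 ≤ |q| * a ^ (q+1) := mul_nonneg (abs_nonneg q) haq1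
      exact mul_le_mul_of_nonneg_left hab_d this
    have total := add_le_add t1 t2
    refine le_trans total ?_
    rw [hexp]
    have e2 : |β| * σ * a ^ q * (2 * a * d) = 2 * (|β| * σ) * (a ^ (q+1) * d) := by
      rw [← ea]; ring
    have e3 : |β| * σ * (|q| * a ^ (q+1) * d) = |β| * σ * |q| * (a ^ (q+1) * d) := by ring
    rw [e2, e3]
    have hX : 0 ≤ a ^ (q+1) * d := mul_nonneg haq1 hd
    have hcmp : 2 * (|β| * σ) + |β| * σ * |q| ≤ |β| * σ * (2 + |q|) + 1 := by nlinarith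
    nlinarith [mul_le_mul_of_nonneg_right hcmp hX]

/-- For `σ ≥ 1/2`: `|G(z₁) - G(z₂)| ≤ C max(|z₁|,|z₂|)^{2σ-1}|z₁-z₂|`,
with `C` depending only on `σ, β`. -/
theorem stmt6 (σ β : ℝ) (hσ : 1 / 2 ≤ σ) :
    ∃ C : ℝ, 0 < C ∧ ∀ z₁ z₂ : ℂ,
      ‖Gfun σ β z₁ - Gfun σ β z₂‖
        ≤ C * (max (‖z₁‖) (‖z₂‖)) ^ (2 * σ - 1)
          * ‖z₁ - z₂‖ := by
  refine ⟨|β| * σ * (2 + |2 * σ - 2|) + 1, ?_, ?_⟩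
  · have : 0 ≤ |β| * σ * (2 + |2 * σ - 2|) := by positivity
    linarith
  intro z₁ z₂
  rcases le_total (‖z₂‖) (‖z₁‖) with h | h
  · rw [max_eq_left h]
    exact main_aux σ β hσ z₁ z₂ h
  · rw [max_eq_right h]
    have := main_aux σ β hσ z₂ z₁ h
    rwa [show Gfun σ β z₂ - Gfun σ β z₁ = -(Gfun σ β z₁ - Gfun σ β z₂) by ring,
      norm_neg, show z₂ - z₁ = -(z₁ - z₂) by ring, norm_neg] at this
end

section
/- Let σ ≥ 1/2, β ∈ ℝ, τ ∈ (0,1), and define Φ(z) = z e^{-iτβ|z|^{2σ}} for z ∈ ℂ. Then for all z₁, z₂ ∈ ℂ, |Φ(z₁) - Φ(z₂)| ≤ (1 + Cτ) |z₁ - z₂| with C ≤ C'(σ,β) max(|z₁|,|z₂|)^{2σ}, where C' depends only on σ and β. -/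
lemma exp_I_lip (x y : ℝ) :
    ‖Complex.exp (x * Complex.I) - Complex.exp (y * Complex.I)‖ ≤ |x - y| := by
  have h : ∀ t : ℝ, HasDerivAt (fun s : ℝ => Complex.exp (s * Complex.I))
      (Complex.exp (t * Complex.I) * Complex.I) t := by
    intro t
    have h1 : HasDerivAt (fun s : ℝ => (s : ℂ) * Complex.I) Complex.I t := by
      simpa using (Complex.ofRealCLM.hasDerivAt (x := t)).mul_const Complex.I
    simpa using h1.cexp
  have := Convex.norm_image_sub_le_of_norm_hasDerivWithin_le
    (f := fun s : ℝ => Complex.exp (s * Complex.I))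
    (C := 1) (fun t _ => (h t).hasDerivWithinAt)
    (fun t _ => by
      rw [norm_mul]
      simp [Complex.norm_exp])
    (convex_univ) (Set.mem_univ y) (Set.mem_univ x)
  simpa [Real.norm_eq_abs] using this

lemma rpow_lip {p a b : ℝ} (hp : 1 ≤ p) (ha : 0 ≤ a) (hab : a ≤ b) :
    b ^ p - a ^ p ≤ p * b ^ (p - 1) * (b - a) := by
  have hb : 0 ≤ b := ha.trans hab
  have h : ∀ t ∈ Set.Icc a b, HasDerivWithinAt (fun s : ℝ => s ^ p)
      (p * t ^ (p - 1)) (Set.Icc a b) t := fun t _ =>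
    (Real.hasDerivAt_rpow_const (Or.inr hp)).hasDerivWithinAt
  have hbd : ∀ t ∈ Set.Icc a b, ‖p * t ^ (p - 1)‖ ≤ p * b ^ (p - 1) := by
    intro t ht
    rw [Real.norm_eq_abs, abs_mul, _root_.abs_of_nonneg (by linarith : (0:ℝ) ≤ p),
      _root_.abs_of_nonneg (Real.rpow_nonneg (ha.trans ht.1) _)]
    exact mul_le_mul_of_nonneg_left
      (Real.rpow_le_rpow (ha.trans ht.1) ht.2 (by linarith)) (by linarith)
  have := Convex.norm_image_sub_le_of_norm_hasDerivWithin_le h hbd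
    (convex_Icc a b) (Set.left_mem_Icc.2 hab) (Set.right_mem_Icc.2 hab)
  rw [Real.norm_eq_abs, Real.norm_eq_abs] at this
  calc b ^ p - a ^ p ≤ |b ^ p - a ^ p| := le_abs_self _
    _ ≤ p * b ^ (p - 1) * |b - a| := this
    _ = p * b ^ (p - 1) * (b - a) := by rw [_root_.abs_of_nonneg (by linarith)]

lemma rpow_lip' {p a b : ℝ} (hp : 1 ≤ p) (ha : 0 ≤ a) (hb : 0 ≤ b) :
    |a ^ p - b ^ p| ≤ p * (max a b) ^ (p - 1) * |a - b| := by
  rcases le_total a b with hab | hab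
  · rw [abs_sub_comm, _root_.abs_of_nonneg (sub_nonneg.2 (Real.rpow_le_rpow ha hab (by linarith))),
      abs_sub_comm, _root_.abs_of_nonneg (sub_nonneg.2 hab), max_eq_right hab]
    exact rpow_lip hp ha hab
  · rw [_root_.abs_of_nonneg (sub_nonneg.2 (Real.rpow_le_rpow hb hab (by linarith))),
      _root_.abs_of_nonneg (sub_nonneg.2 hab), max_eq_left hab]
    exact rpow_lip hp hb hab

/-- Stability of `Φ(z) = z e^{-iτβ|z|^{2σ}}` for `σ ≥ 1/2`:
`|Φ(z₁) - Φ(z₂)| ≤ (1 + Cτ)|z₁ - z₂|` with `C ≤ C'(σ,β) max(|z₁|,|z₂|)^{2σ}`. -/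
theorem stmt7 (σ β : ℝ) (hσ : 1 / 2 ≤ σ) :
    ∃ C' : ℝ, 0 < C' ∧ ∀ τ : ℝ, 0 < τ → τ < 1 → ∀ z₁ z₂ : ℂ,
      ‖(z₁ * Complex.exp (-Complex.I * τ * ((β * (‖z₁‖) ^ (2 * σ) : ℝ) : ℂ))
            - z₂ * Complex.exp (-Complex.I * τ * ((β * (‖z₂‖) ^ (2 * σ) : ℝ) : ℂ)))‖
        ≤ (1 + C' * (max (‖z₁‖) (‖z₂‖)) ^ (2 * σ) * τ)
          * ‖(z₁ - z₂)‖ := by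
  refine ⟨2 * σ * |β| + 1, by positivity, fun τ hτ hτ1 z₁ z₂ => ?_⟩
  set a := ‖z₁‖ with ha
  set b := ‖z₂‖ with hb
  set M := max a b with hM
  have ha0 : 0 ≤ a := norm_nonneg _
  have hb0 : 0 ≤ b := norm_nonneg _
  have hM0 : 0 ≤ M := le_trans ha0 (le_max_left _ _)
  have hp : 1 ≤ 2 * σ := by linarith
  set c₁ : ℝ := β * a ^ (2 * σ) with hc₁
  set c₂ : ℝ := β * b ^ (2 * σ) with hc₂
  set E₁ := Complex.exp (-Complex.I * τ * (c₁ : ℂ)) with hE₁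
  set E₂ := Complex.exp (-Complex.I * τ * (c₂ : ℂ)) with hE₂
  have hE : ∀ c : ℝ, -Complex.I * τ * (c : ℂ) = ((-(τ * c) : ℝ) : ℂ) * Complex.I := by
    intro c; push_cast; ring
  have hE₁abs : ‖E₁‖ = 1 := by
    rw [hE₁, Complex.norm_exp]; norm_num
  have hdiff : ‖E₁ - E₂‖ ≤ τ * |c₁ - c₂| := by
    rw [hE₁, hE₂, hE c₁, hE c₂]
    calc ‖Complex.exp (((-(τ * c₁) : ℝ) : ℂ) * Complex.I)
          - Complex.exp (((-(τ * c₂) : ℝ) : ℂ) * Complex.I)‖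
        ≤ |(-(τ * c₁)) - (-(τ * c₂))| := exp_I_lip _ _
      _ = τ * |c₁ - c₂| := by
          rw [show (-(τ * c₁)) - (-(τ * c₂)) = τ * (c₂ - c₁) by ring, abs_mul,
            _root_.abs_of_nonneg hτ.le, abs_sub_comm]
  -- bound on |c₁ - c₂|
  have hcd : |c₁ - c₂| ≤ |β| * (2 * σ * M ^ (2 * σ - 1) * |a - b|) := by
    rw [hc₁, hc₂, ← mul_sub, abs_mul]
    exact mul_le_mul_of_nonneg_left (rpow_lip' hp ha0 hb0) (abs_nonneg _)
  have habM : b * M ^ (2 * σ - 1) ≤ M ^ (2 * σ) := by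
    rcases eq_or_lt_of_le hM0 with h | h
    · have hbM : b ≤ M := le_max_right _ _
      have : b = 0 := le_antisymm (hbM.trans_eq h.symm) hb0
      rw [this, zero_mul]
      exact Real.rpow_nonneg hM0 _
    · calc b * M ^ (2 * σ - 1) ≤ M * M ^ (2 * σ - 1) :=
          mul_le_mul_of_nonneg_right (le_max_right _ _) (Real.rpow_nonneg hM0 _)
        _ = M ^ (2 * σ) := by
            rw [show (2 * σ : ℝ) = 1 + (2 * σ - 1) by ring,
              Real.rpow_one_add' hM0 (by intro hc; linarith)]
            norm_num
  have habz : |a - b| ≤ ‖z₁ - z₂‖ := by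
    rw [ha, hb]; exact abs_norm_sub_norm_le z₁ z₂
  -- main chain
  have key : z₁ * E₁ - z₂ * E₂ = (z₁ - z₂) * E₁ + z₂ * (E₁ - E₂) := by ring
  calc ‖z₁ * E₁ - z₂ * E₂‖
      ≤ ‖(z₁ - z₂) * E₁‖ + ‖z₂ * (E₁ - E₂)‖ := by
        rw [key]; exact norm_add_le _ _
    _ = ‖z₁ - z₂‖ + b * ‖E₁ - E₂‖ := by
        rw [norm_mul, norm_mul, hE₁abs, mul_one, ← hb]
    _ ≤ ‖z₁ - z₂‖ + b * (τ * (|β| * (2 * σ * M ^ (2 * σ - 1) * |a - b|))) := by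
        have : ‖E₁ - E₂‖ ≤ τ * (|β| * (2 * σ * M ^ (2 * σ - 1) * |a - b|)) :=
          hdiff.trans (mul_le_mul_of_nonneg_left hcd hτ.le)
        exact add_le_add_right (mul_le_mul_of_nonneg_left this hb0) _
    _ ≤ ‖z₁ - z₂‖
        + (2 * σ * |β| + 1) * M ^ (2 * σ) * τ * ‖z₁ - z₂‖ := by
        have h1 : b * (τ * (|β| * (2 * σ * M ^ (2 * σ - 1) * |a - b|)))
            = τ * |β| * (2 * σ) * (b * M ^ (2 * σ - 1)) * |a - b| := by ring
        rw [h1]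
        have h2 : τ * |β| * (2 * σ) * (b * M ^ (2 * σ - 1)) * |a - b|
            ≤ τ * |β| * (2 * σ) * M ^ (2 * σ) * ‖z₁ - z₂‖ := by
          apply mul_le_mul
          · exact mul_le_mul_of_nonneg_left habM (by positivity)
          · exact habz
          · exact abs_nonneg _
          · positivity
        refine add_le_add_right (h2.trans ?_) _
        have h3 : τ * |β| * (2 * σ) * M ^ (2 * σ) ≤ (2 * σ * |β| + 1) * M ^ (2 * σ) * τ := by
          have hMp : 0 ≤ M ^ (2 * σ) := Real.rpow_nonneg hM0 _
          nlinarith [mul_nonneg (abs_nonneg β) hMp, mul_nonneg hτ.le hMp]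
        exact mul_le_mul_of_nonneg_right h3 (norm_nonneg _)
    _ = (1 + (2 * σ * |β| + 1) * M ^ (2 * σ) * τ) * ‖z₁ - z₂‖ := by ring
end
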